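/- Let Q > 0 be a random variable whose logarithm X = log Q is symmetric about 0. Then for 0 < t ≤ 1, E[t/(t + Q)] ≥ (1 + (1/t - 3)·P(Q < t)/2) / (1 + 1/t). In particular, if t ≤ 1/3 then E[t/(t+Q)] ≥ 1/(1 + 1/t). -/

import Mathlib

open MeasureTheory

section aux

lemma alg1 (t q : ℝ) (ht0 : 0 < t) (ht1 : t ≤ 1) (hq : 0 < q) :
    2*t/(1+t) ≤ t/(t+q) + t*q/(t*q+1) := by
  have h1 : (0:ℝ) < t + q := by linarith
  have h2 : (0:ℝ) < t*q + 1 := by positivity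
  have key : t/(t+q) + t*q/(t*q+1) - 2*t/(1+t)
      = t*(1-t)*(q-1)^2 / ((t+q)*(t*q+1)*(1+t)) := by
    field_simp
    ring
  have hnum : (0:ℝ) ≤ t*(1-t)*(q-1)^2 :=
    mul_nonneg (mul_nonneg ht0.le (by linarith)) (sq_nonneg _)
  nlinarith [div_nonneg hnum (le_of_lt (by positivity : (0:ℝ) < (t+q)*(t*q+1)*(1+t)))]

lemma alg2 (t q : ℝ) (ht0 : 0 < t) (ht1 : t ≤ 1) (hq : 0 < q)
    (h : q < t ∨ 1/t < q) :
    1/2 + t^2/(1+t^2) ≤ t/(t+q) + t*q/(t*q+1) := by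
  have h1 : (0:ℝ) < t + q := by linarith
  have h2 : (0:ℝ) < t*q + 1 := by positivity
  have ht2 : (0:ℝ) ≤ 1 - t^2 := by nlinarith
  have key : t/(t+q) + t*q/(t*q+1) - (1/2 + t^2/(1+t^2))
      = (1-t^2)*(t*q-1)*(q-t) / (2*(t+q)*(t*q+1)*(1+t^2)) := by
    field_simp
    ring
  have hnum : (0:ℝ) ≤ (1-t^2)*(t*q-1)*(q-t) := by
    rcases h with h | h
    · have ha : (0:ℝ) ≤ 1 - t*q := by nlinarith
      have hb : (0:ℝ) ≤ t - q := by linarith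
      nlinarith [mul_nonneg (mul_nonneg ht2 ha) hb]
    · have hti : t ≤ 1/t := by rw [le_div_iff₀ ht0]; nlinarith
      have ha : (0:ℝ) ≤ t*q - 1 := by
        rw [div_lt_iff₀ ht0] at h; nlinarith
      have hb : (0:ℝ) ≤ q - t := by linarith
      nlinarith [mul_nonneg (mul_nonneg ht2 ha) hb]
  nlinarith [div_nonneg hnum (le_of_lt (by positivity : (0:ℝ) < 2*(t+q)*(t*q+1)*(1+t^2)))]

lemma integrable_of_bounds {Ω : Type*} [MeasurableSpace Ω] (μ : Measure Ω)
    [IsProbabilityMeasure μ] (f : Ω → ℝ) (hf : Measurable f)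
    (h0 : ∀ ω, 0 ≤ f ω) (h1 : ∀ ω, f ω ≤ 1) : Integrable f μ := by
  apply Integrable.mono' (integrable_const (1:ℝ)) hf.aestronglyMeasurable
  filter_upwards with ω
  rw [Real.norm_eq_abs, abs_of_nonneg (h0 ω)]
  exact h1 ω

end aux

/-- Let `Q > 0` be a random variable whose logarithm is symmetric about `0`. Then for
`0 < t ≤ 1`, `E[t/(t+Q)] ≥ (1 + (1/t - 3) P(Q < t)/2)/(1 + 1/t)`; in particular, if
`t ≤ 1/3` then `E[t/(t+Q)] ≥ 1/(1 + 1/t)`. -/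
theorem F_lower_bound {Ω : Type*} [MeasurableSpace Ω] (μ : Measure Ω)
    [IsProbabilityMeasure μ] (Q : Ω → ℝ) (hQ : Measurable Q) (hQpos : ∀ ω, 0 < Q ω)
    (hsym : Measure.map (fun ω => Real.log (Q ω)) μ
      = Measure.map (fun ω => -Real.log (Q ω)) μ)
    (t : ℝ) (ht0 : 0 < t) (ht1 : t ≤ 1) :
    (1 + (1 / t - 3) * (μ {ω | Q ω < t}).toReal / 2) / (1 + 1 / t)
      ≤ ∫ ω, t / (t + Q ω) ∂μ ∧
    (t ≤ 1 / 3 → 1 / (1 + 1 / t) ≤ ∫ ω, t / (t + Q ω) ∂μ) := by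
  set f1 : Ω → ℝ := fun ω => t / (t + Q ω) with hf1
  set f2 : Ω → ℝ := fun ω => t * Q ω / (t * Q ω + 1) with hf2
  have hden1 : ∀ ω, (0:ℝ) < t + Q ω := fun ω => by have := hQpos ω; linarith
  have hden2 : ∀ ω, (0:ℝ) < t * Q ω + 1 := fun ω => by
    nlinarith [mul_pos ht0 (hQpos ω)]
  have hf1m : Measurable f1 := measurable_const.div (measurable_const.add hQ)
  have hf2m : Measurable f2 := (measurable_const.mul hQ).div
    ((measurable_const.mul hQ).add measurable_const)
  have hf1i : Integrable f1 μ := by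
    apply integrable_of_bounds μ f1 hf1m
    · intro ω; exact div_nonneg ht0.le (hden1 ω).le
    · intro ω; rw [div_le_one (hden1 ω)]; linarith [hQpos ω]
  have hf2i : Integrable f2 μ := by
    apply integrable_of_bounds μ f2 hf2m
    · intro ω; exact div_nonneg (mul_pos ht0 (hQpos ω)).le (hden2 ω).le
    · intro ω; rw [div_le_one (hden2 ω)]; linarith
  -- the log variable
  have hX : Measurable fun ω => Real.log (Q ω) := hQ.log
  -- Step 1: ∫ f1 = ∫ f2
  have hg : Continuous fun x => t / (t + Real.exp x) := by
    apply continuous_const.div (continuous_const.add Real.continuous_exp)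
    intro x
    have := Real.exp_pos x
    exact (add_pos ht0 this).ne'
  have hEq : ∫ ω, f1 ω ∂μ = ∫ ω, f2 ω ∂μ := by
    have e1 : ∫ ω, f1 ω ∂μ
        = ∫ x, t / (t + Real.exp x) ∂(Measure.map (fun ω => Real.log (Q ω)) μ) := by
      rw [integral_map hX.aemeasurable hg.aestronglyMeasurable]
      congr 1
      funext ω
      rw [Real.exp_log (hQpos ω)]
    rw [e1, hsym, integral_map (φ := fun ω => -Real.log (Q ω)) hX.neg.aemeasurable hg.aestronglyMeasurable]
    congr 1
    funext ω
    have hq := hQpos ω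
    rw [Real.exp_neg, Real.exp_log hq]
    rw [hf2]
    field_simp
  -- the bad set
  set A : Set Ω := {ω | Q ω < t} ∪ {ω | 1/t < Q ω} with hA
  have hAm : MeasurableSet A :=
    (measurableSet_lt hQ measurable_const).union (measurableSet_lt measurable_const hQ)
  set c : ℝ := 1/2 + t^2/(1+t^2) - 2*t/(1+t) with hc
  set p : ℝ := (μ {ω | Q ω < t}).toReal with hp
  have hp0 : 0 ≤ p := ENNReal.toReal_nonneg
  -- symmetry of the two tails
  have htails : μ {ω | 1/t < Q ω} = μ {ω | Q ω < t} := by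
    have h1 : {ω | Q ω < t} = (fun ω => Real.log (Q ω)) ⁻¹' (Set.Iio (Real.log t)) := by
      ext ω
      simp only [Set.mem_setOf_eq, Set.mem_preimage, Set.mem_Iio]
      exact (Real.log_lt_log_iff (hQpos ω) ht0).symm
    have h2 : {ω | 1/t < Q ω} = (fun ω => -Real.log (Q ω)) ⁻¹' (Set.Iio (Real.log t)) := by
      ext ω
      simp only [Set.mem_setOf_eq, Set.mem_preimage, Set.mem_Iio, neg_lt]
      rw [← Real.log_inv]
      rw [Real.log_lt_log_iff (by positivity) (hQpos ω), inv_eq_one_div]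
    rw [h1, h2]
    rw [← Measure.map_apply hX measurableSet_Iio,
        ← Measure.map_apply (f := fun ω => -Real.log (Q ω)) hX.neg measurableSet_Iio, hsym]
  have hAmeas : (μ A).toReal = 2 * p := by
    have hdisj : Disjoint {ω | Q ω < t} {ω | 1/t < Q ω} := by
      rw [Set.disjoint_left]
      intro ω h1 h2
      simp only [Set.mem_setOf_eq] at h1 h2
      have : t ≤ 1/t := by rw [le_div_iff₀ ht0]; nlinarith
      linarith
    rw [hA, measure_union hdisj (measurableSet_lt measurable_const hQ), htails,
        ENNReal.toReal_add (measure_ne_top μ _) (measure_ne_top μ _)]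
    ring
  -- integral lower bound for f1 + f2
  have hbound : 2*t/(1+t) + c * (2*p) ≤ ∫ ω, (f1 ω + f2 ω) ∂μ := by
    have hind : Integrable (fun ω => 2*t/(1+t) + c * A.indicator (fun _ => (1:ℝ)) ω) μ :=
      (integrable_const _).add (((integrable_const (1:ℝ)).indicator hAm).const_mul c)
    have hle : ∀ ω, 2*t/(1+t) + c * A.indicator (fun _ => (1:ℝ)) ω ≤ f1 ω + f2 ω := by
      intro ω
      by_cases hω : ω ∈ A
      · rw [Set.indicator_of_mem hω]
        have := alg2 t (Q ω) ht0 ht1 (hQpos ω) (by simpa [hA] using hω)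
        simp only [hf1, hf2, hc]
        linarith
      · rw [Set.indicator_of_notMem hω]
        have := alg1 t (Q ω) ht0 ht1 (hQpos ω)
        simp only [hf1, hf2]
        linarith
    calc 2*t/(1+t) + c * (2*p)
        = ∫ ω, (2*t/(1+t) + c * A.indicator (fun _ => (1:ℝ)) ω) ∂μ := by
          rw [integral_add (integrable_const _)
            (((integrable_const (1:ℝ)).indicator hAm).const_mul c),
            integral_const, integral_const_mul, integral_indicator_const _ hAm]
          simp [Measure.real, hAmeas]
      _ ≤ ∫ ω, (f1 ω + f2 ω) ∂μ := integral_mono hind (hf1i.add hf2i) hle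
  have hsum : ∫ ω, (f1 ω + f2 ω) ∂μ = 2 * ∫ ω, f1 ω ∂μ := by
    rw [integral_add hf1i hf2i, ← hEq]; ring
  have hmain : t/(1+t) + c * p ≤ ∫ ω, f1 ω ∂μ := by
    rw [hsum] at hbound
    have h2 : 2*t/(1+t) = 2*(t/(1+t)) := by ring
    linarith [hbound, h2.ge, h2.le]
  have h1t : (0:ℝ) < 1 + 1/t := by positivity
  have first : (1 + (1/t - 3) * p / 2) / (1 + 1/t) ≤ ∫ ω, f1 ω ∂μ := by
    rw [div_le_iff₀ h1t]
    have ht2 : (0:ℝ) < 1 + t^2 := by positivity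
    have h1pt : (0:ℝ) < 1 + t := by linarith
    have key : (t/(1+t) + c*p)*(1+1/t) - (1 + (1/t-3)*p/2) = p*(t*(1+t)/(1+t^2)) := by
      rw [hc]; field_simp; ring
    have hpos : (0:ℝ) ≤ p*(t*(1+t)/(1+t^2)) := by positivity
    nlinarith [mul_le_mul_of_nonneg_right hmain h1t.le]
  refine ⟨first, fun ht3 => ?_⟩
  refine le_trans ?_ first
  gcongr
  have h13 : (0:ℝ) ≤ 1/t - 3 := by
    rw [sub_nonneg, le_div_iff₀ ht0]; linarith
  nlinarith
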